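/- For every integer n ≥ 2 and every real t ∈ [0,1], the quantity μ₀(n,t) = ((3-2n)t + 1 - 2n + sqrt((1-t)·((4n-5)t + 4n² - 4n + 1)))/(2(n-1)²) satisfies μ₀(n,t) ≥ -(t² + (2n+1)t)/(n² - t). -/
import Mathlib


/-- For every integer `n ≥ 2` and `t ∈ [0,1]`,
`μ₀(n,t) ≥ -(t² + (2n+1)t)/(n² - t)`. -/
theorem stmt1 (n : ℕ) (hn : 2 ≤ n) (t : ℝ) (ht0 : 0 ≤ t) (ht1 : t ≤ 1) :
    ((3 - 2*(n:ℝ))*t + 1 - 2*(n:ℝ) +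
        Real.sqrt ((1 - t) * ((4*(n:ℝ) - 5)*t + 4*(n:ℝ)^2 - 4*(n:ℝ) + 1)))
      / (2*((n:ℝ) - 1)^2) ≥ -(t^2 + (2*(n:ℝ) + 1)*t)/((n:ℝ)^2 - t) := by
  have hx : (2:ℝ) ≤ (n:ℝ) := by exact_mod_cast hn
  set x : ℝ := (n:ℝ) with hxdef
  set y : ℝ := (1 - t) * ((4*x - 5)*t + 4*x^2 - 4*x + 1) with hydef
  have hy : 0 ≤ y := by
    apply mul_nonneg (by linarith)
    nlinarith
  have hD2 : 0 < x^2 - t := by nlinarith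
  have hD1 : 0 < 2*(x - 1)^2 := by nlinarith
  set stuff : ℝ := -(t^2 + (2*x + 1)*t)*(2*(x - 1)^2) - ((3 - 2*x)*t + 1 - 2*x)*(x^2 - t)
    with hstuff
  have key : stuff^2 ≤ y * (x^2 - t)^2 := by
    have hid : y * (x^2 - t)^2 - stuff^2 = 4*t*(1 - t)*(x - 1)^3*(x + 1)*(x + t)^2 := by
      rw [hstuff, hydef]; ring
    have hnn : 0 ≤ 4*t*(1 - t)*(x - 1)^3*(x + 1)*(x + t)^2 := by
      apply mul_nonneg
      apply mul_nonneg
      apply mul_nonneg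
      apply mul_nonneg
      · linarith
      · linarith
      · nlinarith
      · linarith
      · positivity
    linarith
  have h1 : stuff ≤ Real.sqrt (stuff^2) := by
    rw [Real.sqrt_sq_eq_abs]; exact le_abs_self _
  have h2 : Real.sqrt (stuff^2) ≤ Real.sqrt (y * (x^2 - t)^2) := Real.sqrt_le_sqrt key
  have h3 : Real.sqrt (y * (x^2 - t)^2) = Real.sqrt y * (x^2 - t) := by
    rw [Real.sqrt_mul hy, Real.sqrt_sq hD2.le]
  have h4 : stuff ≤ Real.sqrt y * (x^2 - t) := by
    calc stuff ≤ Real.sqrt (stuff^2) := h1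
    _ ≤ Real.sqrt (y * (x^2 - t)^2) := h2
    _ = Real.sqrt y * (x^2 - t) := h3
  rw [ge_iff_le, div_le_div_iff₀ hD2 hD1]
  nlinarith [h4]
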